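/- Let κ, σ, ρ, T be real numbers with σ ≠ 0 and T > 0, let u ∈ ℂ, and let η ∈ ℂ satisfy η² = (κ + uσρ)² − σ²u(u+1) and η ≠ 0. Define D(t) = η(e^{η(T−t)} + 1) + (κ + uσρ)(e^{η(T−t)} − 1), assume D(t) ≠ 0 for all t ∈ [0, T], and set ψ(t) = −u(u+1)(e^{η(T−t)} − 1)/D(t). Then for every t ∈ [0, T], exp((σ²/2) ∫_t^T ψ(s) ds) = D(t) e^{−(1/2)(η + κ + uσρ)(T−t)} / (2η). -/

import Mathlib

open Complex

theorem heston_integral_psi (κ σ ρ T : ℝ) (hσ : σ ≠ 0) (hT : 0 < T)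
    (u η : ℂ) (hη2 : η ^ 2 = ((κ : ℂ) + u * σ * ρ) ^ 2 - (σ : ℂ) ^ 2 * u * (u + 1))
    (hη : η ≠ 0)
    (D : ℝ → ℂ)
    (hD : ∀ t : ℝ, D t = η * (Complex.exp (η * (T - t)) + 1) +
      ((κ : ℂ) + u * σ * ρ) * (Complex.exp (η * (T - t)) - 1))
    (hD0 : ∀ t ∈ Set.Icc (0 : ℝ) T, D t ≠ 0)
    (ψ : ℝ → ℂ)
    (hψ : ∀ t : ℝ, ψ t = -u * (u + 1) * (Complex.exp (η * (T - t)) - 1) / D t) :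
    ∀ t ∈ Set.Icc (0 : ℝ) T,
      Complex.exp ((σ : ℂ) ^ 2 / 2 * ∫ s in t..T, ψ s) =
        D t * Complex.exp (-(1 / 2) * (η + (κ : ℂ) + u * σ * ρ) * (T - t)) / (2 * η) := by
  set c : ℂ := (κ : ℂ) + u * σ * ρ with hc
  have hs2 : (σ : ℂ) ^ 2 * u * (u + 1) = c ^ 2 - η ^ 2 := by
    linear_combination hη2
  have hEcont : Continuous fun t : ℝ => Complex.exp (η * ((T : ℂ) - t)) := by
    apply Complex.continuous_exp.comp; fun_prop
  have hDeq : D = fun t : ℝ => η * (Complex.exp (η * ((T : ℂ) - t)) + 1) +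
      c * (Complex.exp (η * ((T : ℂ) - t)) - 1) := funext hD
  have hDcont : Continuous D := by rw [hDeq]; fun_prop
  have hψeq : ψ = fun t : ℝ => -u * (u + 1) * (Complex.exp (η * ((T : ℂ) - t)) - 1) / D t :=
    funext hψ
  have hψmeas : Measurable ψ := by
    rw [hψeq]
    exact (measurable_const.mul (hEcont.measurable.sub measurable_const)).div hDcont.measurable
  have hψcont : ContinuousOn ψ (Set.Icc 0 T) := by
    rw [hψeq]
    exact ((continuous_const.mul (hEcont.sub continuous_const)).continuousOn).div
      hDcont.continuousOn hD0
  have hint : ∀ a ∈ Set.Icc (0:ℝ) T, ∀ b ∈ Set.Icc (0:ℝ) T,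
      IntervalIntegrable ψ MeasureTheory.volume a b := fun a ha b hb =>
    (hψcont.mono (Set.uIcc_subset_Icc ha hb)).intervalIntegrable
  set I : ℝ → ℂ := fun t => ∫ s in t..T, ψ s with hI
  have hIcont : ContinuousOn I (Set.Icc 0 T) := by
    have h1 : MeasureTheory.IntegrableOn ψ (Set.uIcc 0 T) := by
      rw [Set.uIcc_of_le hT.le]; exact hψcont.integrableOn_Icc
    have := intervalIntegral.continuousOn_primitive_interval_left h1
    rwa [Set.uIcc_of_le hT.le] at this
  set f : ℝ → ℂ := fun t =>
    Complex.exp ((σ : ℂ)^2/2 * I t) * Complex.exp ((η + c)/2 * ((T:ℂ) - t)) * (2*η) / D t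
    with hf
  have hfcont : ContinuousOn f (Set.Icc 0 T) := by
    apply ContinuousOn.div _ hDcont.continuousOn hD0
    apply ContinuousOn.mul _ continuousOn_const
    apply ContinuousOn.mul
    · exact Complex.continuous_exp.comp_continuousOn (hIcont.const_smul ((σ:ℂ)^2/2))
    · fun_prop
  have hderiv : ∀ x ∈ Set.Ico (0:ℝ) T, HasDerivWithinAt f 0 (Set.Ici x) x := by
    intro x hx
    have hxIcc : x ∈ Set.Icc (0:ℝ) T := ⟨hx.1, hx.2.le⟩
    have hDx : D x ≠ 0 := hD0 x hxIcc
    have hIi : IntervalIntegrable ψ MeasureTheory.volume x T :=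
      hint x hxIcc T ⟨hT.le, le_refl T⟩
    have hmeas : StronglyMeasurableAtFilter ψ (nhdsWithin x (Set.Ioi x)) :=
      ⟨Set.univ, Filter.univ_mem, hψmeas.aestronglyMeasurable.restrict⟩
    have hmem : Set.Icc 0 T ∈ nhdsWithin x (Set.Ioi x) :=
      mem_nhdsWithin.mpr ⟨Set.Iio T, isOpen_Iio, hx.2,
        fun y hy => ⟨hx.1.trans hy.2.le, hy.1.le⟩⟩
    have hcw : ContinuousWithinAt ψ (Set.Ioi x) x :=
      (hψcont x hxIcc).mono_of_mem_nhdsWithin hmem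
    have hDI : HasDerivWithinAt I (-ψ x) (Set.Ici x) x :=
      intervalIntegral.integral_hasDerivWithinAt_left hIi hmeas hcw
    have hr : HasDerivAt (fun t : ℝ => ((t : ℝ) : ℂ)) 1 x := by
      simpa using (hasDerivAt_id x).ofReal_comp
    have hsub : HasDerivAt (fun t : ℝ => (T : ℂ) - t) (-1) x := hr.const_sub (T : ℂ)
    have hE' : HasDerivAt (fun t : ℝ => Complex.exp (η * ((T : ℂ) - t)))
        (Complex.exp (η * ((T : ℂ) - x)) * (η * (-1))) x := (hsub.const_mul η).cexp
    have hDD : HasDerivAt D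
        (η * (Complex.exp (η * ((T : ℂ) - x)) * (η * (-1))) +
         c * (Complex.exp (η * ((T : ℂ) - x)) * (η * (-1)))) x := by
      rw [hDeq]
      exact ((hE'.add_const 1).const_mul η).add ((hE'.sub_const 1).const_mul c)
    have hA : HasDerivWithinAt (fun t : ℝ => Complex.exp ((σ : ℂ)^2/2 * I t))
        (Complex.exp ((σ : ℂ)^2/2 * I x) * ((σ : ℂ)^2/2 * (-ψ x))) (Set.Ici x) x :=
      (hDI.const_mul ((σ : ℂ)^2/2)).cexp
    have hB : HasDerivWithinAt (fun t : ℝ => Complex.exp ((η + c)/2 * ((T:ℂ) - t)))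
        (Complex.exp ((η + c)/2 * ((T:ℂ) - x)) * ((η + c)/2 * (-1))) (Set.Ici x) x :=
      ((hsub.const_mul ((η + c)/2)).cexp).hasDerivWithinAt
    have hfd := ((hA.mul hB).mul_const (2*η)).div hDD.hasDerivWithinAt hDx
    have hψx : ψ x * D x = -u * (u + 1) * (Complex.exp (η * ((T : ℂ) - x)) - 1) := by
      rw [hψ x]
      field_simp
    refine hfd.congr_deriv ?_
    rw [div_eq_zero_iff]
    simp only [Pi.mul_apply]
    left
    linear_combination (-Complex.exp ((σ : ℂ)^2/2 * I x) *
        Complex.exp ((η + c)/2 * ((T:ℂ) - x)) * η * (σ:ℂ)^2) * hψx +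
      (-Complex.exp ((σ : ℂ)^2/2 * I x) * Complex.exp ((η + c)/2 * ((T:ℂ) - x)) * η * (η + c)) *
        (hD x) +
      (Complex.exp ((σ : ℂ)^2/2 * I x) * Complex.exp ((η + c)/2 * ((T:ℂ) - x)) * η *
        (Complex.exp (η * ((T : ℂ) - x)) - 1)) * hs2
  have hcon := constant_of_has_deriv_right_zero hfcont hderiv
  have hfT : f T = 1 := by
    have hIT : I T = 0 := intervalIntegral.integral_same
    have hTT : (T : ℂ) - (T : ℂ) = 0 := sub_self _
    simp only [hf]
    rw [hIT, hD T, hTT]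
    norm_num
    rw [div_eq_one_iff_eq (by simpa using hη)]
    ring
  intro t ht
  have hft : f t = 1 := (hcon t ht).trans ((hcon T ⟨hT.le, le_refl T⟩).symm.trans hfT)
  simp only [hf] at hft
  have hDt : D t ≠ 0 := hD0 t ht
  have hexp2 : Complex.exp ((η + c)/2 * ((T:ℂ) - t)) ≠ 0 := Complex.exp_ne_zero _
  rw [div_eq_one_iff_eq hDt] at hft
  have harg : -(1/2 : ℂ) * (η + (κ : ℂ) + u * σ * ρ) * ((T:ℂ) - t) =
      -((η + c)/2 * ((T:ℂ) - t)) := by rw [hc]; ring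
  rw [harg, Complex.exp_neg,
    show ((σ:ℂ)^2/2 * ∫ s in t..T, ψ s) = (σ:ℂ)^2/2 * I t from rfl, ← hft]
  field_simp
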